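/- arXiv:2102.02979 — 3 statements merged into one kernel-verified Lean document; each statement's English description precedes it below -/
import Mathlib

section
/- For probability measures μ, ν on {0,...,N-1} (N even), 𝔽(μ,ν) ≤ (π/√3)·√(KL(μ||ν)), where KL is the Kullback-Leibler divergence. -/
open Finset

/-- Discrete Fourier transform of a real vector, at integer frequency `k`. -/
noncomputable def dft (N : ℕ) (f : Fin N → ℝ) (k : ℤ) : ℂ :=
  ∑ j : Fin N, (f j : ℂ) * Complex.exp (-2 * Real.pi * Complex.I * ((j : ℕ) : ℂ) * (k : ℂ) / (N : ℂ))

/-- Squared Fourier Discrepancy between two vectors. -/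
noncomputable def F2 (N : ℕ) (μ ν : Fin N → ℝ) : ℝ :=
  (∑ k ∈ Finset.Icc 1 (N / 2 - 1), ‖dft N μ (k : ℤ) - dft N ν (k : ℤ)‖ ^ 2 / (k : ℝ) ^ 2)
    + ‖dft N μ ((N : ℤ) / 2) - dft N ν ((N : ℤ) / 2)‖ ^ 2 / (N : ℝ) ^ 2

/-- Fourier Discrepancy. -/
noncomputable def FD (N : ℕ) (μ ν : Fin N → ℝ) : ℝ := Real.sqrt (F2 N μ ν)

/-- Total variation distance. -/
noncomputable def TV (N : ℕ) (μ ν : Fin N → ℝ) : ℝ := (1 / 2) * ∑ i : Fin N, |μ i - ν i|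

/-- A probability vector. -/
def IsProb (N : ℕ) (μ : Fin N → ℝ) : Prop := (∀ i, 0 ≤ μ i) ∧ ∑ i : Fin N, μ i = 1

/-- Kullback-Leibler divergence of two probability vectors (finite case,
with the convention `0 * log 0 = 0`). -/
noncomputable def KL (N : ℕ) (μ ν : Fin N → ℝ) : ℝ :=
  ∑ x : Fin N, μ x * Real.log (μ x / ν x)

/-! ### Auxiliary lemmas -/

noncomputable def gg (t : ℝ) : ℝ := (2*t+4)*(t*Real.log t - t + 1) - 3*(t-1)^2
noncomputable def gg' (t : ℝ) : ℝ := 2*(t*Real.log t - t + 1) + (2*t+4)*Real.log t - 6*(t-1)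

lemma hasDerivAt_gg {t : ℝ} (ht : t ≠ 0) : HasDerivAt gg (gg' t) t := by
  have h1 : HasDerivAt (fun t : ℝ => t*Real.log t - t + 1) (Real.log t) t := by
    simpa using ((Real.hasDerivAt_mul_log ht).sub (hasDerivAt_id t)).add_const 1
  have h2 : HasDerivAt (fun t : ℝ => 2*t+4) 2 t := by
    simpa using ((hasDerivAt_id t).const_mul 2).add_const 4
  have h3 : HasDerivAt (fun t : ℝ => 3*(t-1)^2) (6*(t-1)) t := by
    have := (((hasDerivAt_id t).sub_const 1).pow 2).const_mul 3
    refine this.congr_deriv ?_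
    simp
    ring
  have := (h2.mul h1).sub h3
  exact this

lemma hasDerivAt_gg' {t : ℝ} (ht : 0 < t) : HasDerivAt gg' (4*Real.log t + 4/t - 4) t := by
  have h1 : HasDerivAt (fun t : ℝ => t*Real.log t - t + 1) (Real.log t) t := by
    simpa using ((Real.hasDerivAt_mul_log ht.ne').sub (hasDerivAt_id t)).add_const 1
  have h2 : HasDerivAt (fun t : ℝ => 2*t+4) 2 t := by
    simpa using ((hasDerivAt_id t).const_mul 2).add_const 4
  have h4 : HasDerivAt Real.log t⁻¹ t := Real.hasDerivAt_log ht.ne'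
  have h5 : HasDerivAt (fun t : ℝ => 6*(t-1)) 6 t := by
    simpa using ((hasDerivAt_id t).sub_const 1).const_mul 6
  have := ((h1.const_mul 2).add (h2.mul h4)).sub h5
  refine this.congr_deriv ?_
  field_simp
  ring

lemma gg'_nonneg_deriv {t : ℝ} (ht : 0 < t) : 0 ≤ 4*Real.log t + 4/t - 4 := by
  have h := Real.log_le_sub_one_of_pos (x := t⁻¹) (by positivity)
  rw [Real.log_inv] at h
  have h2 : 1 - t⁻¹ ≤ Real.log t := by linarith
  have h3 : 4/t = 4*t⁻¹ := by rw [div_eq_mul_inv]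
  rw [h3]
  linarith

lemma gg_nonneg {t : ℝ} (ht : 0 < t) : 0 ≤ gg t := by
  have hg'1 : gg' 1 = 0 := by simp [gg']
  have hg1 : gg 1 = 0 := by simp [gg]
  have hdiff : ∀ x ∈ Set.Ioi (0:ℝ), DifferentiableAt ℝ gg x :=
    fun x hx => (hasDerivAt_gg (ne_of_gt hx)).differentiableAt
  have hmono : MonotoneOn gg' (Set.Ioi 0) := by
    apply monotoneOn_of_deriv_nonneg (convex_Ioi 0)
    · exact fun x hx => (hasDerivAt_gg' hx).continuousAt.continuousWithinAt
    · rw [interior_Ioi]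
      exact fun x hx => ((hasDerivAt_gg' hx).differentiableAt).differentiableWithinAt
    · intro x hx
      rw [interior_Ioi] at hx
      rw [(hasDerivAt_gg' hx).deriv]
      exact gg'_nonneg_deriv hx
  rcases le_total 1 t with h | h
  · have hmg : MonotoneOn gg (Set.Ici 1) := by
      apply monotoneOn_of_deriv_nonneg (convex_Ici 1)
      · exact fun x hx => (hasDerivAt_gg (by have := hx.out; intro h0; rw [h0] at this; linarith)).continuousAt.continuousWithinAt
      · rw [interior_Ici]
        exact fun x hx => (hdiff x (Set.mem_Ioi.2 (lt_trans one_pos hx))).differentiableWithinAt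
      · intro x hx
        rw [interior_Ici] at hx
        have hx1 : (1:ℝ) < x := hx
        rw [(hasDerivAt_gg (by linarith)).deriv]
        calc (0:ℝ) = gg' 1 := hg'1.symm
        _ ≤ gg' x := hmono (by norm_num) (Set.mem_Ioi.2 (by linarith)) hx1.le
    have := hmg (Set.mem_Ici.2 le_rfl) (Set.mem_Ici.2 h) h
    rw [hg1] at this; exact this
  · have hmg : AntitoneOn gg (Set.Ioc 0 1) := by
      apply antitoneOn_of_deriv_nonpos (convex_Ioc 0 1)
      · exact fun x hx => (hasDerivAt_gg (ne_of_gt hx.1)).continuousAt.continuousWithinAt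
      · rw [interior_Ioc]
        exact fun x hx => (hdiff x (Set.mem_Ioi.2 hx.1)).differentiableWithinAt
      · intro x hx
        rw [interior_Ioc] at hx
        rw [(hasDerivAt_gg (ne_of_gt hx.1)).deriv]
        calc gg' x ≤ gg' 1 := hmono (Set.mem_Ioi.2 hx.1) (by norm_num) hx.2.le
        _ = 0 := hg'1
    have := hmg (Set.mem_Ioc.2 ⟨ht, h⟩) (Set.mem_Ioc.2 ⟨by norm_num, le_rfl⟩) h
    rw [hg1] at this; exact this

lemma key_ineq (t : ℝ) (ht : 0 < t) :
    3*(t-1)^2 ≤ (2*t+4)*(t*Real.log t - t + 1) := by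
  have := gg_nonneg ht
  unfold gg at this
  linarith

lemma key_ineq2 {a b : ℝ} (ha : 0 ≤ a) (hb : 0 ≤ b) (hab : b = 0 → a = 0) :
    3*(a-b)^2 ≤ (2*a+4*b)*(a*Real.log (a/b) - a + b) := by
  rcases eq_or_lt_of_le hb with hb0 | hb0
  · have ha0 := hab hb0.symm
    simp [ha0, ← hb0]
  rcases eq_or_lt_of_le ha with ha0 | ha0
  · rw [← ha0]
    rw [zero_div, Real.log_zero]
    nlinarith
  · have ht : 0 < a / b := by positivity
    have h := mul_le_mul_of_nonneg_left (key_ineq (a/b) ht) (sq_nonneg b)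
    have e1 : b^2 * (3*(a/b-1)^2) = 3*(a-b)^2 := by
      field_simp
    have e2 : b^2 * ((2*(a/b)+4)*((a/b)*Real.log (a/b) - a/b + 1))
        = (2*a+4*b)*(a*Real.log (a/b) - a + b) := by
      field_simp
    rw [e1, e2] at h
    exact h

lemma pinsker (N : ℕ) (μ ν : Fin N → ℝ) (hμ : IsProb N μ) (hν : IsProb N ν)
    (hac : ∀ x, ν x = 0 → μ x = 0) :
    (∑ i : Fin N, |μ i - ν i|)^2 ≤ 2 * KL N μ ν := by
  set f : Fin N → ℝ := fun i => Real.sqrt (3*(μ i - ν i)^2 / (2*μ i + 4*ν i)) with hf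
  set g : Fin N → ℝ := fun i => Real.sqrt (2*μ i + 4*ν i) with hg
  have hc : ∀ i, 0 ≤ 2*μ i + 4*ν i := fun i => by
    have := hμ.1 i; have := hν.1 i; linarith
  have hfg : ∀ i, f i * g i = Real.sqrt 3 * |μ i - ν i| := by
    intro i
    rcases eq_or_lt_of_le (hc i) with h0 | h0
    · have hμ0 : μ i = 0 := by have := hμ.1 i; have := hν.1 i; linarith
      have hν0 : ν i = 0 := by have := hμ.1 i; have := hν.1 i; linarith
      simp [hf, hg, hμ0, hν0]
    · rw [hf, hg]
      rw [← Real.sqrt_mul (div_nonneg (by positivity) (hc i))]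
      rw [div_mul_cancel₀ _ (ne_of_gt h0)]
      rw [Real.sqrt_mul (by norm_num), Real.sqrt_sq_eq_abs]
  have hcs := Finset.sum_mul_sq_le_sq_mul_sq Finset.univ f g
  have hf2 : ∀ i, f i ^ 2 = 3*(μ i - ν i)^2 / (2*μ i + 4*ν i) := by
    intro i
    rw [hf]; exact Real.sq_sqrt (div_nonneg (by positivity) (hc i))
  have hg2 : ∀ i, g i ^ 2 = 2*μ i + 4*ν i := by
    intro i; rw [hg, Real.sq_sqrt (hc i)]
  have hsum_g : ∑ i : Fin N, g i ^ 2 = 6 := by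
    simp only [hg2]
    rw [Finset.sum_add_distrib, ← Finset.mul_sum, ← Finset.mul_sum, hμ.2, hν.2]
    norm_num
  have hsum_f : ∑ i : Fin N, f i ^ 2 ≤ KL N μ ν := by
    have hterm : ∀ i : Fin N, f i ^ 2 ≤ μ i * Real.log (μ i / ν i) - μ i + ν i := by
      intro i
      rw [hf2]
      rcases eq_or_lt_of_le (hc i) with h0 | h0
      · have hμ0 : μ i = 0 := by have := hμ.1 i; have := hν.1 i; linarith
        have hν0 : ν i = 0 := by have := hμ.1 i; have := hν.1 i; linarith
        simp [hμ0, hν0]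
      · rw [div_le_iff₀ h0]
        have := key_ineq2 (hμ.1 i) (hν.1 i) (hac i)
        linarith [this]
    calc ∑ i : Fin N, f i ^ 2 ≤ ∑ i : Fin N, (μ i * Real.log (μ i / ν i) - μ i + ν i) :=
          Finset.sum_le_sum (fun i _ => hterm i)
      _ = KL N μ ν := by
          rw [Finset.sum_add_distrib, Finset.sum_sub_distrib, hμ.2, hν.2, KL]
          ring
  have hleft : (∑ i : Fin N, f i * g i)^2 = 3 * (∑ i : Fin N, |μ i - ν i|)^2 := by
    simp only [hfg]
    rw [← Finset.mul_sum, mul_pow, Real.sq_sqrt (by norm_num)]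
  nlinarith [hcs, Finset.sum_nonneg (fun i (_ : i ∈ Finset.univ) => abs_nonneg (μ i - ν i))]

lemma dft_sub_le (N : ℕ) (μ ν : Fin N → ℝ) (k : ℤ) :
    ‖dft N μ k - dft N ν k‖ ≤ ∑ j : Fin N, |μ j - ν j| := by
  rw [dft, dft, ← Finset.sum_sub_distrib]
  refine le_trans (norm_sum_le _ _) (Finset.sum_le_sum fun j _ => ?_)
  rw [← sub_mul, norm_mul]
  have he : (-2 * (Real.pi:ℂ) * Complex.I * ((j:ℕ):ℂ) * (k:ℂ) / (N:ℂ))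
      = ((-2 * Real.pi * (j:ℕ) * (k:ℤ) / (N:ℕ) : ℝ) : ℂ) * Complex.I := by
    push_cast
    ring
  rw [he, Complex.norm_exp_ofReal_mul_I, mul_one]
  rw [← Complex.ofReal_sub, Complex.norm_real, Real.norm_eq_abs]

lemma basel_partial (M : ℕ) : ∑ k ∈ Finset.Icc 1 M, (1:ℝ)/(k:ℝ)^2 ≤ Real.pi^2/6 :=
  sum_le_hasSum (Finset.Icc 1 M) (fun i _ => by positivity) hasSum_zeta_two

/-- upper bound of the Fourier Discrepancy by the Kullback-Leibler
divergence (when `μ` is absolutely continuous with respect to `ν`; otherwise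
`KL(μ‖ν) = +∞` and the bound is trivial). -/
theorem fourier_le_kl (N : ℕ) (hN : 0 < N) (hNe : Even N)
    (μ ν : Fin N → ℝ) (hμ : IsProb N μ) (hν : IsProb N ν)
    (hac : ∀ x, ν x = 0 → μ x = 0) :
    FD N μ ν ≤ (Real.pi / Real.sqrt 3) * Real.sqrt (KL N μ ν) := by
  set D : ℝ := ∑ i : Fin N, |μ i - ν i| with hD
  have hD0 : 0 ≤ D := Finset.sum_nonneg (fun i _ => abs_nonneg _)
  have hPin : D^2 ≤ 2 * KL N μ ν := pinsker N μ ν hμ hν hac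
  have hKL : 0 ≤ KL N μ ν := by nlinarith [sq_nonneg D]
  -- N ≥ 2, M := N/2 ≥ 1
  have hN2 : 2 ≤ N := by
    rcases hNe with ⟨m, hm⟩
    omega
  have hM1 : 1 ≤ N / 2 := by omega
  -- bound each Fourier term by D
  have hterm : ∀ k : ℤ, ‖dft N μ k - dft N ν k‖^2 ≤ D^2 := by
    intro k
    have h := dft_sub_le N μ ν k
    have := norm_nonneg (dft N μ k - dft N ν k)
    nlinarith
  -- bound F2
  have hF2 : F2 N μ ν ≤ D^2 * (Real.pi^2/6) := by
    have hstep : F2 N μ ν ≤ D^2 * ((∑ k ∈ Finset.Icc 1 (N / 2 - 1), (1:ℝ)/(k:ℝ)^2) + 1/(N:ℝ)^2) := by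
      rw [F2, mul_add, Finset.mul_sum]
      apply add_le_add
      · apply Finset.sum_le_sum
        intro k hk
        have hk1 : 1 ≤ k := (Finset.mem_Icc.1 hk).1
        have hkpos : (0:ℝ) < (k:ℝ)^2 := by positivity
        have e : D^2 * ((1:ℝ)/(k:ℝ)^2) = D^2/(k:ℝ)^2 := by ring
        rw [e]
        gcongr
        exact dft_sub_le N μ ν k
      · have hNpos : (0:ℝ) < (N:ℝ)^2 := by positivity
        rw [mul_one_div]
        gcongr
        exact dft_sub_le N μ ν _
    refine hstep.trans (mul_le_mul_of_nonneg_left ?_ (sq_nonneg D))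
    -- ∑_{1}^{M-1} 1/k² + 1/N² ≤ ∑_{1}^{M} 1/k² ≤ π²/6
    have h1 : (1:ℝ)/(N:ℝ)^2 ≤ 1/((N/2 : ℕ):ℝ)^2 := by
      have h2 : ((N/2 : ℕ):ℝ) ≤ (N:ℝ) := by
        exact_mod_cast Nat.div_le_self N 2
      have h3 : (0:ℝ) < ((N/2 : ℕ):ℝ) := by
        exact_mod_cast hM1
      apply one_div_le_one_div_of_le (by positivity)
      nlinarith
    have h4 : Finset.Icc 1 (N/2) = insert (N/2) (Finset.Icc 1 (N/2 - 1)) := by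
      have e : N/2 = (N/2 - 1) + 1 := by omega
      rw [e, ← Finset.insert_Icc_right_eq_Icc_add_one (by omega)]
      simp
    calc (∑ k ∈ Finset.Icc 1 (N / 2 - 1), (1:ℝ)/(k:ℝ)^2) + 1/(N:ℝ)^2
        ≤ (∑ k ∈ Finset.Icc 1 (N / 2 - 1), (1:ℝ)/(k:ℝ)^2) + 1/((N/2 : ℕ):ℝ)^2 := by
          linarith
      _ = ∑ k ∈ Finset.Icc 1 (N/2), (1:ℝ)/(k:ℝ)^2 := by
          rw [h4, Finset.sum_insert (by simp; omega)]
          ring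
      _ ≤ Real.pi^2/6 := basel_partial _
  -- conclude
  have hF2' : F2 N μ ν ≤ (Real.pi^2/3) * KL N μ ν := by
    calc F2 N μ ν ≤ D^2 * (Real.pi^2/6) := hF2
      _ ≤ (2 * KL N μ ν) * (Real.pi^2/6) := by
          apply mul_le_mul_of_nonneg_right hPin (by positivity)
      _ = (Real.pi^2/3) * KL N μ ν := by ring
  rw [FD]
  calc Real.sqrt (F2 N μ ν) ≤ Real.sqrt ((Real.pi^2/3) * KL N μ ν) := Real.sqrt_le_sqrt hF2'
    _ = Real.sqrt (Real.pi^2/3) * Real.sqrt (KL N μ ν) := Real.sqrt_mul (by positivity) _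
    _ = (Real.pi / Real.sqrt 3) * Real.sqrt (KL N μ ν) := by
        rw [Real.sqrt_div (sq_nonneg _), Real.sqrt_sq Real.pi_pos.le]
end

section
/- The lower tight bound equals C_L(θ) = 2θ/N: for all probability measures μ, ν on {0,...,N-1} with TV(μ,ν) = θ, one has 𝔽(μ,ν) ≥ 2θ/N, with equality for μ = (2θ/N)(1,0,1,0,...,0) + (1-θ)δ_0 and ν = (2θ/N)(0,1,0,1,...,1) + (1-θ)δ_0. -/
open Finset

/- ======== auxiliary lemmas ======== -/

lemma LTB.expsum (N : ℕ) (hN : 0 < N) (m : ℤ) :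
    ∑ j ∈ Finset.range N, Complex.exp (-2 * Real.pi * Complex.I * (j : ℂ) * (m : ℂ) / (N : ℂ)) =
      if (N : ℤ) ∣ m then (N : ℂ) else 0 := by
  have hNC : (N : ℂ) ≠ 0 := Nat.cast_ne_zero.mpr hN.ne'
  set ζ : ℂ := Complex.exp (-2 * Real.pi * Complex.I * (m : ℂ) / (N : ℂ)) with hζdef
  have hpow : ∀ j : ℕ, Complex.exp (-2 * Real.pi * Complex.I * (j : ℂ) * (m : ℂ) / (N : ℂ)) = ζ ^ j := by
    intro j
    rw [hζdef, ← Complex.exp_nat_mul]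
    congr 1; ring
  simp_rw [hpow]
  by_cases h : (N : ℤ) ∣ m
  · obtain ⟨c, hc⟩ := h
    have hζ1 : ζ = 1 := by
      rw [hζdef, Complex.exp_eq_one_iff]
      refine ⟨-c, ?_⟩
      have : (m : ℂ) = (N : ℂ) * (c : ℂ) := by exact_mod_cast congrArg (fun x : ℤ => (x : ℂ)) hc
      field_simp [this]
      push_cast; rw [this]; ring
    simp only [hζ1, one_pow, Finset.sum_const, Finset.card_range, nsmul_eq_mul, mul_one]
    rw [if_pos ⟨c, hc⟩]
  · have hζne : ζ ≠ 1 := by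
      intro hζ1
      rw [hζdef, Complex.exp_eq_one_iff] at hζ1
      obtain ⟨n, hn⟩ := hζ1
      apply h
      refine ⟨-n, ?_⟩
      have h2 : (2 : ℂ) * Real.pi * Complex.I ≠ 0 := by
        simp [Real.pi_ne_zero, Complex.I_ne_zero, Complex.ofReal_ne_zero]
      have : (m : ℂ) = (N : ℂ) * (-n : ℤ) := by
        field_simp at hn
        push_cast
        have hm : (m : ℂ) * (2 * Real.pi * Complex.I) = ((N : ℂ) * (-(n : ℂ))) * (2 * Real.pi * Complex.I) := by
          linear_combination (-(2 * (Real.pi : ℂ) * Complex.I)) * hn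
        exact mul_right_cancel₀ h2 hm
      exact_mod_cast this
    rw [geom_sum_eq hζne]
    have hζN : ζ ^ N = 1 := by
      rw [hζdef, ← Complex.exp_nat_mul]
      have : (N : ℂ) * (-2 * Real.pi * Complex.I * (m : ℂ) / (N : ℂ)) = (-m : ℤ) * (2 * Real.pi * Complex.I) := by
        field_simp; push_cast; ring
      rw [this, Complex.exp_int_mul_two_pi_mul_I]
    rw [hζN]
    simp [h]

lemma LTB.dft_sub (N : ℕ) (μ ν : Fin N → ℝ) (k : ℤ) :
    dft N μ k - dft N ν k = dft N (fun j => μ j - ν j) k := by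
  unfold dft
  rw [← Finset.sum_sub_distrib]
  congr 1; ext j; push_cast; ring

lemma LTB.dft_conj (N : ℕ) (hN : 0 < N) (f : Fin N → ℝ) (k : ℤ) :
    dft N f ((N : ℤ) - k) = starRingEnd ℂ (dft N f k) := by
  have hNC : (N : ℂ) ≠ 0 := Nat.cast_ne_zero.mpr hN.ne'
  unfold dft
  rw [map_sum]
  congr 1; ext j
  rw [map_mul, Complex.conj_ofReal, ← Complex.exp_conj]
  congr 1
  have hconj : (starRingEnd ℂ) (-2 * ↑Real.pi * Complex.I * ((j : ℕ) : ℂ) * (k : ℂ) / (N : ℂ))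
      = 2 * ↑Real.pi * Complex.I * ((j : ℕ) : ℂ) * (k : ℂ) / (N : ℂ) := by
    simp only [map_div₀, map_mul, Complex.conj_I, Complex.conj_ofReal, map_neg, map_ofNat,
      map_natCast, map_intCast]
    ring
  rw [hconj]
  have : -2 * ↑Real.pi * Complex.I * ((j : ℕ) : ℂ) * (((N : ℤ) - k : ℤ) : ℂ) / (N : ℂ)
      = (-(j : ℤ) : ℂ) * (2 * ↑Real.pi * Complex.I) + 2 * ↑Real.pi * Complex.I * ((j : ℕ) : ℂ) * (k : ℂ) / (N : ℂ) := by
    push_cast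
    field_simp
    ring
  have h1 : Complex.exp (-((j : ℕ) : ℂ) * (2 * (Real.pi : ℂ) * Complex.I)) = 1 := by
    have := Complex.exp_int_mul_two_pi_mul_I (-(j : ℕ) : ℤ)
    push_cast at this
    exact this
  rw [this, Complex.exp_add]
  norm_num at h1 ⊢
  exact h1

lemma LTB.norm_dft_conj (N : ℕ) (hN : 0 < N) (f : Fin N → ℝ) (k : ℤ) :
    ‖dft N f ((N : ℤ) - k)‖ = ‖dft N f k‖ := by
  rw [LTB.dft_conj N hN f k, RCLike.norm_conj]

lemma LTB.parseval (N : ℕ) (hN : 0 < N) (f : Fin N → ℝ) :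
    ∑ k ∈ Finset.range N, ‖dft N f (k : ℤ)‖ ^ 2 = N * ∑ j : Fin N, f j ^ 2 := by
  have hNC : (N : ℂ) ≠ 0 := Nat.cast_ne_zero.mpr hN.ne'
  have key : (↑(∑ k ∈ Finset.range N, ‖dft N f (k : ℤ)‖ ^ 2) : ℂ)
      = ((N : ℝ) * ∑ j : Fin N, f j ^ 2 : ℝ) := by
    push_cast
    have hz : ∀ z : ℂ, (‖z‖ ^ 2 : ℂ) = z * starRingEnd ℂ z := by
      intro z
      rw [Complex.mul_conj]
      norm_cast
      rw [Complex.sq_norm]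
    simp_rw [hz]
    have hexp : ∀ k ∈ Finset.range N, dft N f (k : ℤ) * starRingEnd ℂ (dft N f (k : ℤ))
        = ∑ j : Fin N, ∑ l : Fin N, (f j : ℂ) * (f l : ℂ) *
            Complex.exp (-2 * Real.pi * Complex.I * (k : ℂ) * ((((j : ℕ) : ℤ) - ((l : ℕ) : ℤ) : ℤ) : ℂ) / (N : ℂ)) := by
      intro k _
      unfold dft
      rw [map_sum, Finset.sum_mul_sum]
      congr 1; ext j; congr 1; ext l
      rw [map_mul, Complex.conj_ofReal, ← Complex.exp_conj]
      have hconj : (starRingEnd ℂ) (-2 * ↑Real.pi * Complex.I * ((l : ℕ) : ℂ) * ((k : ℤ) : ℂ) / (N : ℂ))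
          = 2 * ↑Real.pi * Complex.I * ((l : ℕ) : ℂ) * ((k : ℤ) : ℂ) / (N : ℂ) := by
        simp only [map_div₀, map_mul, Complex.conj_I, Complex.conj_ofReal, map_neg, map_ofNat,
          map_natCast, map_intCast]
        ring
      rw [hconj, mul_mul_mul_comm, ← Complex.exp_add]
      congr 1
      push_cast
      ring
    rw [Finset.sum_congr rfl hexp]
    rw [Finset.sum_comm]
    have : ∀ j : Fin N, ∑ k ∈ Finset.range N, ∑ l : Fin N, (f j : ℂ) * (f l : ℂ) *
            Complex.exp (-2 * Real.pi * Complex.I * (k : ℂ) * ((((j : ℕ) : ℤ) - ((l : ℕ) : ℤ) : ℤ) : ℂ) / (N : ℂ))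
        = (f j : ℂ) * (f j : ℂ) * N := by
      intro j
      rw [Finset.sum_comm]
      have hinner : ∀ l : Fin N, ∑ k ∈ Finset.range N, (f j : ℂ) * (f l : ℂ) *
            Complex.exp (-2 * Real.pi * Complex.I * (k : ℂ) * ((((j : ℕ) : ℤ) - ((l : ℕ) : ℤ) : ℤ) : ℂ) / (N : ℂ))
          = (f j : ℂ) * (f l : ℂ) * (if l = j then (N : ℂ) else 0) := by
        intro l
        rw [← Finset.mul_sum, LTB.expsum N hN]
        by_cases h : l = j
        · subst h; simp
        · rw [if_neg h, if_neg]
          intro hdvd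
          apply h
          have h0 : ((j : ℕ) : ℤ) - ((l : ℕ) : ℤ) = 0 := by
            refine Int.eq_zero_of_abs_lt_dvd hdvd ?_
            have hj := j.isLt
            have hl := l.isLt
            rw [abs_sub_lt_iff]
            omega
          have : (l : ℕ) = (j : ℕ) := by omega
          exact Fin.ext this.symm ▸ rfl
      rw [Finset.sum_congr rfl (fun l _ => hinner l)]
      simp
    rw [Finset.sum_congr rfl (fun j _ => this j)]
    push_cast
    rw [Finset.mul_sum]
    congr 1
    ext j
    ring
  exact_mod_cast key

lemma LTB.dft_zero (N : ℕ) (f : Fin N → ℝ) : dft N f 0 = ((∑ j : Fin N, f j : ℝ) : ℂ) := by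
  unfold dft
  push_cast
  congr 1; ext j
  simp

lemma LTB.dft_alt (m : ℕ) (hm : 0 < m) (c : ℝ) (k : ℤ) :
    dft (2 * m) (fun j => (-1 : ℝ) ^ (j : ℕ) * c) k
      = if ((2 * m : ℕ) : ℤ) ∣ (k + m) then ((c : ℂ) * (2 * m : ℕ)) else 0 := by
  have hN : 0 < 2 * m := by omega
  have hNC : ((2 * m : ℕ) : ℂ) ≠ 0 := Nat.cast_ne_zero.mpr hN.ne'
  unfold dft
  simp only [Complex.ofReal_mul, Complex.ofReal_pow, Complex.ofReal_neg, Complex.ofReal_one]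
  rw [Fin.sum_univ_eq_sum_range (fun j => ((-1 : ℂ) ^ j * (c : ℂ)) *
    Complex.exp (-2 * Real.pi * Complex.I * (j : ℂ) * (k : ℂ) / ((2 * m : ℕ) : ℂ)))]
  have hterm : ∀ j : ℕ, ((-1 : ℂ) ^ j * (c : ℂ)) *
      Complex.exp (-2 * Real.pi * Complex.I * (j : ℂ) * (k : ℂ) / ((2 * m : ℕ) : ℂ))
      = (c : ℂ) * Complex.exp (-2 * Real.pi * Complex.I * (j : ℂ) * ((k + (m : ℤ) : ℤ) : ℂ) / ((2 * m : ℕ) : ℂ)) := by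
    intro j
    have hneg1 : ((-1 : ℂ)) ^ j = Complex.exp (-(Real.pi : ℂ) * Complex.I * j) := by
      have h' : -(Real.pi : ℂ) * Complex.I * j = (j : ℕ) * (-((Real.pi : ℂ) * Complex.I)) := by
        ring
      rw [h', Complex.exp_nat_mul, Complex.exp_neg, Complex.exp_pi_mul_I]
      norm_num
    rw [hneg1, mul_comm ((Complex.exp (-(Real.pi : ℂ) * Complex.I * j))) (c : ℂ), mul_assoc,
      ← Complex.exp_add]
    congr 2
    have hmC : (m : ℂ) ≠ 0 := Nat.cast_ne_zero.mpr hm.ne'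
    push_cast
    field_simp
    ring
  rw [Finset.sum_congr rfl (fun j _ => hterm j), ← Finset.mul_sum, LTB.expsum (2 * m) hN (k + m)]
  by_cases h : ((2 * m : ℕ) : ℤ) ∣ (k + m)
  · rw [if_pos h, if_pos h]
  · rw [if_neg h, if_neg h, mul_zero]

lemma LTB.filter_even_card (m : ℕ) :
    ((Finset.range (2 * m)).filter (fun i => Even i)).card = m := by
  induction m with
  | zero => simp
  | succ n ih =>
    have h2 : 2 * (n + 1) = (2 * n + 1) + 1 := by ring
    rw [h2, Finset.range_add_one, Finset.range_add_one, Finset.filter_insert, Finset.filter_insert]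
    have he : ¬ Even (2 * n + 1) := by simp [Nat.even_add_one]
    have ho : Even (2 * n) := even_two_mul n
    rw [if_neg he, if_pos ho, Finset.card_insert_of_notMem (by simp)]
    omega

lemma LTB.lower (m : ℕ) (hm : 0 < m) (θ : ℝ) (hθ0 : 0 < θ)
    (μ ν : Fin (2 * m) → ℝ) (hμ : IsProb (2 * m) μ) (hν : IsProb (2 * m) ν)
    (hTV : TV (2 * m) μ ν = θ) :
    2 * θ / (2 * m : ℕ) ≤ FD (2 * m) μ ν := by
  have hN : 0 < 2 * m := by omega
  have hmR : (0 : ℝ) < m := by exact_mod_cast hm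
  set g : Fin (2 * m) → ℝ := fun j => μ j - ν j with hg
  have habs : ∑ j : Fin (2 * m), |g j| = 2 * θ := by
    unfold TV at hTV
    linarith [hTV]
  have hsum0 : ∑ j : Fin (2 * m), g j = 0 := by
    simp only [hg, Finset.sum_sub_distrib, hμ.2, hν.2, sub_self]
  set h : ℕ → ℝ := fun k => ‖dft (2 * m) g (k : ℤ)‖ ^ 2 with hh
  have hh0 : ∀ k, 0 ≤ h k := fun k => sq_nonneg _
  set S : ℝ := ∑ k ∈ Finset.Ico 1 m, h k with hS
  have hS0 : 0 ≤ S := Finset.sum_nonneg fun k _ => hh0 k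
  -- F2 in terms of g
  have hF2 : F2 (2 * m) μ ν = (∑ k ∈ Finset.Ico 1 m, ‖dft (2 * m) g (k : ℤ)‖ ^ 2 / (k : ℝ) ^ 2)
      + h m / ((2 * m : ℕ) : ℝ) ^ 2 := by
    unfold F2
    have h1 : (2 * m) / 2 - 1 = m - 1 := by omega
    have h2 : ((2 * m : ℕ) : ℤ) / 2 = (m : ℤ) := by push_cast; omega
    have h3 : Finset.Icc 1 (m - 1) = Finset.Ico 1 m := by
      ext k; simp only [Finset.mem_Icc, Finset.mem_Ico]; omega
    rw [h1, h2, h3]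
    simp_rw [LTB.dft_sub]
    rfl
  -- Parseval
  have hpars : ∑ k ∈ Finset.range (2 * m), h k = (2 * m) * ∑ j : Fin (2 * m), g j ^ 2 := by
    have := LTB.parseval (2 * m) hN g
    push_cast at this ⊢
    exact this
  -- split of the Parseval sum
  have hDC : ∑ k ∈ Finset.Ico (m + 1) (2 * m), h k = S := by
    rw [hS]
    refine Finset.sum_nbij' (i := fun k => 2 * m - k) (j := fun k => 2 * m - k) ?_ ?_ ?_ ?_ ?_
    · intro a ha; simp only [Finset.mem_Ico] at *; omega
    · intro a ha; simp only [Finset.mem_Ico] at *; omega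
    · intro a ha; simp only [Finset.mem_Ico] at *; omega
    · intro a ha; simp only [Finset.mem_Ico] at *; omega
    · intro a ha
      simp only [Finset.mem_Ico] at ha
      have hcast : ((2 * m - a : ℕ) : ℤ) = ((2 * m : ℕ) : ℤ) - (a : ℤ) := by omega
      simp only [hh]
      rw [hcast, LTB.norm_dft_conj (2 * m) hN g (a : ℤ)]
  have hsplit : ∑ k ∈ Finset.range (2 * m), h k = h 0 + S + h m + S := by
    rw [Finset.range_eq_Ico,
      ← Finset.sum_Ico_consecutive h (by omega : 0 ≤ m + 1) (by omega : m + 1 ≤ 2 * m),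
      ← Finset.sum_Ico_consecutive h (by omega : 0 ≤ m) (by omega : m ≤ m + 1),
      ← Finset.sum_Ico_consecutive h (by omega : 0 ≤ 1) (by omega : 1 ≤ m), hDC]
    have e1 : ∑ k ∈ Finset.Ico 0 1, h k = h 0 := by simp
    have e2 : ∑ k ∈ Finset.Ico m (m + 1), h k = h m := by simp
    rw [e1, e2, hS]
  have hdft0 : h 0 = 0 := by
    simp only [hh]
    rw [show ((0 : ℕ) : ℤ) = 0 by rfl, LTB.dft_zero, hsum0]
    simp
  -- Cauchy-Schwarz
  have hCS : (2 * θ) ^ 2 ≤ (2 * m) * ∑ j : Fin (2 * m), g j ^ 2 := by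
    have := sq_sum_le_card_mul_sum_sq (s := (Finset.univ : Finset (Fin (2 * m))))
      (f := fun j => |g j|)
    simp only [Finset.card_univ, Fintype.card_fin, sq_abs] at this
    rw [habs] at this
    exact_mod_cast this
  have hmain : (2 * θ) ^ 2 ≤ 4 * S + h m := by
    have : (2 * θ) ^ 2 ≤ 2 * S + h m := by
      have := hpars
      rw [hsplit, hdft0] at this
      linarith [hCS]
    linarith
  -- each term of F2 dominates h k / m^2
  have hterm : ∀ k ∈ Finset.Ico 1 m, h k / (m : ℝ) ^ 2 ≤ ‖dft (2 * m) g (k : ℤ)‖ ^ 2 / (k : ℝ) ^ 2 := by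
    intro k hk
    simp only [Finset.mem_Ico] at hk
    have hk1 : (1 : ℝ) ≤ (k : ℝ) := by exact_mod_cast hk.1
    have hkm : (k : ℝ) ≤ (m : ℝ) := by exact_mod_cast hk.2.le
    exact div_le_div_of_nonneg_left (hh0 k) (by positivity) (by nlinarith)
  have hF2low : (2 * θ / (2 * m : ℕ)) ^ 2 ≤ F2 (2 * m) μ ν := by
    rw [hF2]
    have h1 : S / (m : ℝ) ^ 2 ≤ ∑ k ∈ Finset.Ico 1 m, ‖dft (2 * m) g (k : ℤ)‖ ^ 2 / (k : ℝ) ^ 2 := by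
      rw [hS, Finset.sum_div]
      exact Finset.sum_le_sum hterm
    have h2 : (2 * θ / (2 * m : ℕ)) ^ 2 ≤ S / (m : ℝ) ^ 2 + h m / ((2 * m : ℕ) : ℝ) ^ 2 := by
      push_cast
      rw [div_pow]
      have hden : (0 : ℝ) < (2 * (m : ℝ)) ^ 2 := by positivity
      rw [div_add_div _ _ (by positivity : ((m : ℝ) ^ 2) ≠ 0) (by positivity : ((2 * (m : ℝ)) ^ 2) ≠ 0),
        div_le_div_iff₀ hden (by positivity)]
      ring_nf
      simp only [hh] at hmain
      nlinarith [mul_le_mul_of_nonneg_left hmain (by positivity : (0:ℝ) ≤ (m:ℝ)^4), hS0, hh0 m]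
    linarith
  have hgoal0 : (0 : ℝ) ≤ 2 * θ / (2 * m : ℕ) := by positivity
  unfold FD
  rw [Real.le_sqrt hgoal0 (le_trans (sq_nonneg _) hF2low)]
  exact hF2low

lemma LTB.sum_even (m : ℕ) (c : ℝ) :
    ∑ i : Fin (2 * m), (if Even (i : ℕ) then c else 0) = m * c := by
  rw [Fin.sum_univ_eq_sum_range (fun i => if Even i then c else 0), ← Finset.sum_filter,
    Finset.sum_const, LTB.filter_even_card, nsmul_eq_mul]

lemma LTB.filter_odd_card (m : ℕ) :
    ((Finset.range (2 * m)).filter (fun i => ¬ Even i)).card = m := by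
  rw [Finset.filter_not, Finset.card_sdiff_of_subset (Finset.filter_subset _ _), Finset.card_range,
    LTB.filter_even_card]
  omega

lemma LTB.sum_odd (m : ℕ) (c : ℝ) :
    ∑ i : Fin (2 * m), (if ¬ Even (i : ℕ) then c else 0) = m * c := by
  rw [Fin.sum_univ_eq_sum_range (fun i => if ¬ Even i then c else 0), ← Finset.sum_filter,
    Finset.sum_const, LTB.filter_odd_card, nsmul_eq_mul]

lemma LTB.sum_delta (N : ℕ) (hN : 0 < N) (c : ℝ) :
    ∑ i : Fin N, (if (i : ℕ) = 0 then c else 0) = c := by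
  rw [Fin.sum_univ_eq_sum_range (fun i => if i = 0 then c else 0),
    Finset.sum_ite_eq' (Finset.range N) 0 (fun _ => c)]
  simp [hN]

/-- the lower tight bound is `C_L(θ) = 2θ/N`, attained at the
alternating measures `μ = (2θ/N)(1,0,1,0,…) + (1-θ)δ₀`, `ν = (2θ/N)(0,1,0,1,…) + (1-θ)δ₀`. -/
theorem lower_tight_bound (N : ℕ) (hN : 0 < N) (hNe : Even N)
    (θ : ℝ) (hθ : θ ∈ Set.Ioc (0 : ℝ) 1) :
    (∀ μ ν : Fin N → ℝ, IsProb N μ → IsProb N ν → TV N μ ν = θ →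
      2 * θ / N ≤ FD N μ ν) ∧
    (IsProb N (fun i : Fin N =>
        (if Even (i : ℕ) then 2 * θ / N else 0) + (if (i : ℕ) = 0 then 1 - θ else 0)) ∧
     IsProb N (fun i : Fin N =>
        (if ¬ Even (i : ℕ) then 2 * θ / N else 0) + (if (i : ℕ) = 0 then 1 - θ else 0)) ∧
     TV N (fun i : Fin N =>
        (if Even (i : ℕ) then 2 * θ / N else 0) + (if (i : ℕ) = 0 then 1 - θ else 0))
        (fun i : Fin N =>
        (if ¬ Even (i : ℕ) then 2 * θ / N else 0) + (if (i : ℕ) = 0 then 1 - θ else 0)) = θ ∧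
     FD N (fun i : Fin N =>
        (if Even (i : ℕ) then 2 * θ / N else 0) + (if (i : ℕ) = 0 then 1 - θ else 0))
        (fun i : Fin N =>
        (if ¬ Even (i : ℕ) then 2 * θ / N else 0) + (if (i : ℕ) = 0 then 1 - θ else 0))
       = 2 * θ / N) := by
  obtain ⟨hθ0, hθ1⟩ := hθ
  obtain ⟨m, hm2⟩ := hNe
  have hNm : N = 2 * m := by omega
  subst hNm
  have hm : 0 < m := by omega
  have hmR : (0 : ℝ) < m := by exact_mod_cast hm
  have hNR : (0 : ℝ) < ((2 * m : ℕ) : ℝ) := by positivity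
  set c : ℝ := 2 * θ / ((2 * m : ℕ) : ℝ) with hc
  have hc0 : 0 ≤ c := by positivity
  have hmc : (m : ℝ) * c = θ := by
    rw [hc]
    push_cast
    field_simp
  constructor
  · intro μ ν hμ hν hTV
    exact LTB.lower m hm θ hθ0 μ ν hμ hν hTV
  · set μ0 : Fin (2 * m) → ℝ := fun i =>
      (if Even (i : ℕ) then c else 0) + (if (i : ℕ) = 0 then 1 - θ else 0) with hμ0
    set ν0 : Fin (2 * m) → ℝ := fun i =>
      (if ¬ Even (i : ℕ) then c else 0) + (if (i : ℕ) = 0 then 1 - θ else 0) with hν0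
    have hprobμ : IsProb (2 * m) μ0 := by
      constructor
      · intro i
        refine add_nonneg ?_ ?_ <;> split_ifs <;> first | positivity | linarith
      · rw [hμ0]
        simp only
        rw [Finset.sum_add_distrib, LTB.sum_even, LTB.sum_delta (2 * m) (by omega), hmc]
        ring
    have hprobν : IsProb (2 * m) ν0 := by
      constructor
      · intro i
        refine add_nonneg ?_ ?_ <;> split_ifs <;> first | positivity | linarith
      · rw [hν0]
        simp only
        rw [Finset.sum_add_distrib, LTB.sum_odd, LTB.sum_delta (2 * m) (by omega), hmc]
        ring
    have hpt : ∀ i : Fin (2 * m), μ0 i - ν0 i = (if Even (i : ℕ) then c else -c) := by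
      intro i
      by_cases hi : Even (i : ℕ) <;> simp [hμ0, hν0, hi]
    have hTV0 : TV (2 * m) μ0 ν0 = θ := by
      unfold TV
      have habs : ∀ i : Fin (2 * m), |μ0 i - ν0 i| = c := by
        intro i
        rw [hpt i]
        split_ifs
        · exact abs_of_nonneg hc0
        · rw [abs_neg]; exact abs_of_nonneg hc0
      rw [Finset.sum_congr rfl (fun i _ => habs i), Finset.sum_const, Finset.card_univ,
        Fintype.card_fin, nsmul_eq_mul]
      push_cast
      rw [← hmc]
      ring
    have hdiff : (fun j : Fin (2 * m) => μ0 j - ν0 j) = fun j : Fin (2 * m) => (-1 : ℝ) ^ (j : ℕ) * c := by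
      ext j
      rw [hpt j]
      by_cases hj : Even (j : ℕ)
      · rw [if_pos hj, hj.neg_one_pow, one_mul]
      · rw [if_neg hj, (Nat.not_even_iff_odd.mp hj).neg_one_pow]
        ring
    have hF2eq : F2 (2 * m) μ0 ν0 = c ^ 2 := by
      unfold F2
      simp_rw [LTB.dft_sub, hdiff]
      have hzero : ∀ k ∈ Finset.Icc 1 ((2 * m) / 2 - 1),
          ‖dft (2 * m) (fun j : Fin (2 * m) => (-1 : ℝ) ^ (j : ℕ) * c) ((k : ℕ) : ℤ)‖ ^ 2 / (k : ℝ) ^ 2 = 0 := by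
        intro k hk
        simp only [Finset.mem_Icc] at hk
        have hk' : 1 ≤ k ∧ k ≤ m - 1 := by omega
        rw [LTB.dft_alt m hm c (k : ℤ), if_neg, norm_zero]
        · simp
        · intro hdvd
          have := Int.eq_zero_of_abs_lt_dvd hdvd (by
            rw [abs_of_nonneg (by positivity)]
            push_cast
            omega)
          omega
      rw [Finset.sum_congr rfl hzero, Finset.sum_const, smul_zero, zero_add]
      have hmid : ((2 * m : ℕ) : ℤ) / 2 = (m : ℤ) := by push_cast; omega
      rw [hmid, LTB.dft_alt m hm c (m : ℤ), if_pos ⟨1, by push_cast; ring⟩]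
      have : ((c : ℂ) * ((2 * m : ℕ) : ℂ)) = ((c * ((2 * m : ℕ) : ℝ) : ℝ) : ℂ) := by push_cast; ring
      rw [this, Complex.norm_real, Real.norm_eq_abs, abs_of_nonneg (by positivity)]
      rw [div_eq_iff (by positivity)]
      ring
    refine ⟨hprobμ, hprobν, hTV0, ?_⟩
    unfold FD
    rw [hF2eq, Real.sqrt_sq hc0]
end

section
/- For N even, the point d* = N/2 is a local minimum of the function g: [0,N] → ℝ defined by g(d) = Σ_{k=1}^{N/2-1} cos(2πdk/N)/k² + cos(πd)/N², i.e., g'(N/2) = 0 and g''(N/2) > 0. -/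
open Finset

/-- The function `g(d) = Σ_{k=1}^{N/2-1} cos(2πdk/N)/k² + cos(πd)/N²`. -/
noncomputable def gfun (N : ℕ) (d : ℝ) : ℝ :=
  (∑ k ∈ Finset.Icc 1 (N / 2 - 1), Real.cos (2 * Real.pi * d * (k : ℝ) / N) / (k : ℝ) ^ 2)
    + Real.cos (Real.pi * d) / (N : ℝ) ^ 2


noncomputable def g1fun (N : ℕ) (d : ℝ) : ℝ :=
  (∑ k ∈ Finset.Icc 1 (N / 2 - 1),
      -(2 * Real.pi * (k : ℝ) / N * Real.sin (2 * Real.pi * d * (k : ℝ) / N)) / (k : ℝ) ^ 2)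
    + -(Real.pi * Real.sin (Real.pi * d)) / (N : ℝ) ^ 2

noncomputable def g2fun (N : ℕ) (d : ℝ) : ℝ :=
  (∑ k ∈ Finset.Icc 1 (N / 2 - 1),
      -((2 * Real.pi * (k : ℝ) / N) ^ 2 * Real.cos (2 * Real.pi * d * (k : ℝ) / N)) / (k : ℝ) ^ 2)
    + -(Real.pi ^ 2 * Real.cos (Real.pi * d)) / (N : ℝ) ^ 2

lemma harg_hasDerivAt (N : ℕ) (k : ℕ) (d : ℝ) :
    HasDerivAt (fun d : ℝ => 2 * Real.pi * d * (k : ℝ) / N) (2 * Real.pi * (k : ℝ) / N) d := by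
  have h : (fun d : ℝ => 2 * Real.pi * d * (k : ℝ) / N)
      = fun d : ℝ => (2 * Real.pi * (k : ℝ) / N) * d := by funext x; ring
  rw [h]
  simpa using (hasDerivAt_id d).const_mul (2 * Real.pi * (k : ℝ) / N)

lemma hargpi_hasDerivAt (d : ℝ) : HasDerivAt (fun d : ℝ => Real.pi * d) Real.pi d := by
  simpa using (hasDerivAt_id d).const_mul Real.pi

lemma hasDerivAt_gfun (N : ℕ) (d : ℝ) : HasDerivAt (gfun N) (g1fun N d) d := by
  apply HasDerivAt.add
  · apply HasDerivAt.fun_sum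
    intro k _
    have h := ((Real.hasDerivAt_cos (2 * Real.pi * d * (k : ℝ) / N)).comp d
      (harg_hasDerivAt N k d)).div_const ((k : ℝ) ^ 2)
    refine h.congr_deriv ?_
    ring
  · have h := ((Real.hasDerivAt_cos (Real.pi * d)).comp d (hargpi_hasDerivAt d)).div_const
      ((N : ℝ) ^ 2)
    refine h.congr_deriv ?_
    ring

lemma hasDerivAt_g1fun (N : ℕ) (d : ℝ) : HasDerivAt (g1fun N) (g2fun N d) d := by
  apply HasDerivAt.add
  · apply HasDerivAt.fun_sum
    intro k _
    have h := ((((Real.hasDerivAt_sin (2 * Real.pi * d * (k : ℝ) / N)).comp d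
      (harg_hasDerivAt N k d)).const_mul (2 * Real.pi * (k : ℝ) / N)).neg).div_const ((k : ℝ) ^ 2)
    refine h.congr_deriv ?_
    ring
  · have h := ((((Real.hasDerivAt_sin (Real.pi * d)).comp d
      (hargpi_hasDerivAt d)).const_mul Real.pi).neg).div_const ((N : ℝ) ^ 2)
    refine h.congr_deriv ?_
    ring

lemma cos_nat_pi (n : ℕ) : Real.cos ((n : ℝ) * Real.pi) = (-1 : ℝ) ^ n := by
  simpa using Real.cos_nat_mul_pi_sub 0 n

lemma alt_sum (m : ℕ) :
    ∑ k ∈ Finset.Icc 1 m, ((-1 : ℝ)) ^ (k + 1) = if Even m then 0 else 1 := by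
  induction m with
  | zero => simp
  | succ n ih =>
    rw [Finset.sum_Icc_succ_top (Nat.le_add_left 1 n), ih]
    rcases Nat.even_or_odd n with h | h
    · simp [h, Nat.even_add_one, h.neg_one_pow, pow_succ]
    · simp [Nat.even_add_one, Nat.not_even_iff_odd.2 h, h.neg_one_pow, pow_succ]

/-- `d* = N/2` is a local minimum of `g`, with `g'(N/2) = 0` and
`g''(N/2) > 0`. -/
theorem half_is_local_min (N : ℕ) (hN : 0 < N) (hNe : Even N) :
    IsLocalMin (gfun N) ((N : ℝ) / 2) ∧
    deriv (gfun N) ((N : ℝ) / 2) = 0 ∧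
    0 < deriv (deriv (gfun N)) ((N : ℝ) / 2) := by
  set M := N / 2 with hMdef
  have hN2le : 2 ≤ N := by obtain ⟨m, rfl⟩ := hNe; omega
  have hM1 : 1 ≤ M := by omega
  have hNM : (N : ℝ) = 2 * (M : ℝ) := by
    have h2 : M * 2 = N := Nat.div_mul_cancel hNe.two_dvd
    rw [← h2]; push_cast; ring
  have hb : (N : ℝ) / 2 = (M : ℝ) := by rw [hNM]; ring
  have hMne : (M : ℝ) ≠ 0 := Nat.cast_ne_zero.2 (by omega)
  have hNne : (N : ℝ) ≠ 0 := Nat.cast_ne_zero.2 hN.ne'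
  have hargk : ∀ k : ℕ, 2 * Real.pi * (M : ℝ) * (k : ℝ) / N = (k : ℝ) * Real.pi := by
    intro k; rw [hNM]; field_simp
  have hpiM : Real.pi * (M : ℝ) = (M : ℝ) * Real.pi := mul_comm _ _
  have hg1 : g1fun N ((M : ℝ)) = 0 := by
    unfold g1fun
    rw [hpiM, Real.sin_nat_mul_pi, Finset.sum_eq_zero]
    · simp
    · intro k hk
      rw [hargk, Real.sin_nat_mul_pi]
      simp
  have hg2 : g2fun N ((M : ℝ)) =
      (4 * Real.pi ^ 2 / (N : ℝ) ^ 2) * (if Even (M - 1) then 0 else 1)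
        - Real.pi ^ 2 * (-1 : ℝ) ^ M / (N : ℝ) ^ 2 := by
    unfold g2fun
    rw [hpiM, cos_nat_pi, ← alt_sum, Finset.mul_sum]
    rw [show (M - 1 : ℕ) = N / 2 - 1 from rfl]
    congr 1
    · apply Finset.sum_congr rfl
      intro k hk
      have hk0 : (k : ℝ) ≠ 0 := Nat.cast_ne_zero.2 (by have := (Finset.mem_Icc.mp hk).1; omega)
      rw [hargk, cos_nat_pi, pow_succ]
      field_simp
      ring
    · ring
  have hg2pos : 0 < g2fun N ((M : ℝ)) := by
    rw [hg2]
    rcases Nat.even_or_odd M with h | h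
    · have hodd : Odd (M - 1) := Nat.Even.sub_odd hM1 h odd_one
      rw [if_neg (Nat.not_even_iff_odd.2 hodd), h.neg_one_pow]
      have : 4 * Real.pi ^ 2 / (N : ℝ) ^ 2 * 1 - Real.pi ^ 2 * 1 / (N : ℝ) ^ 2
          = 3 * Real.pi ^ 2 / (N : ℝ) ^ 2 := by ring
      rw [this]
      have := Real.pi_pos
      positivity
    · have heven : Even (M - 1) := Nat.Odd.sub_odd h odd_one
      rw [if_pos heven, h.neg_one_pow]
      have : 4 * Real.pi ^ 2 / (N : ℝ) ^ 2 * 0 - Real.pi ^ 2 * (-1) / (N : ℝ) ^ 2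
          = Real.pi ^ 2 / (N : ℝ) ^ 2 := by ring
      rw [this]
      have := Real.pi_pos
      positivity
  have hderiv : deriv (gfun N) = g1fun N := funext fun x => (hasDerivAt_gfun N x).deriv
  rw [hb]
  have hT := hasDerivAt_iff_tendsto_slope.mp (hasDerivAt_g1fun N ((M : ℝ)))
  have hev : ∀ᶠ x in nhdsWithin ((M : ℝ)) {(M : ℝ)}ᶜ, 0 < slope (g1fun N) ((M : ℝ)) x :=
    hT.eventually (eventually_gt_nhds hg2pos)
  have hleft : ∀ᶠ x in nhdsWithin ((M : ℝ)) (Set.Iio ((M : ℝ))), deriv (gfun N) x ≤ 0 := by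
    filter_upwards [hev.filter_mono (nhdsLT_le_nhdsNE _), self_mem_nhdsWithin]
      with x hx hxlt
    rw [hderiv]
    rw [slope_def_field, hg1, sub_zero] at hx
    rcases div_pos_iff.1 hx with ⟨h1, h2⟩ | ⟨h1, h2⟩
    · exfalso; have : x - (M : ℝ) < 0 := sub_neg.2 hxlt; linarith
    · linarith
  have hright : ∀ᶠ x in nhdsWithin ((M : ℝ)) (Set.Ioi ((M : ℝ))), 0 ≤ deriv (gfun N) x := by
    filter_upwards [hev.filter_mono (nhdsGT_le_nhdsNE _), self_mem_nhdsWithin]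
      with x hx hxgt
    rw [hderiv]
    rw [slope_def_field, hg1, sub_zero] at hx
    rcases div_pos_iff.1 hx with ⟨h1, h2⟩ | ⟨h1, h2⟩
    · linarith
    · exfalso; have : 0 < x - (M : ℝ) := sub_pos.2 hxgt; linarith
  refine ⟨?_, ?_, ?_⟩
  · exact isLocalMin_of_deriv (hasDerivAt_gfun N _).continuousAt
      (Filter.Eventually.of_forall fun x => (hasDerivAt_gfun N x).differentiableAt)
      hleft hright
  · rw [hderiv]; exact hg1
  · rw [hderiv, (hasDerivAt_g1fun N ((M : ℝ))).deriv]; exact hg2pos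
end
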